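/- arXiv:1912.12641 — 6 statements merged into one kernel-verified Lean document; each statement's English description precedes it below -/
import Mathlib

section
/- Let $K \le k$ be real numbers and define the Wronskian $W(r) = \sin_K'(r)\,\sin_k(r) - \sin_K(r)\,\sin_k'(r)$. Then $W(r) \ge 0$ for every $r \ge 0$ with $r \le \pi/\sqrt{k}$ in case $k > 0$ (and for all $r \ge 0$ if $k \le 0$). -/
open Real MeasureTheory Set Filter

/-- The generalized sine function `sin_m`. -/
noncomputable def sinm (m r : ℝ) : ℝ :=
  if 0 < m then Real.sin (Real.sqrt m * r) / Real.sqrt m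
  else if m = 0 then r
  else Real.sinh (Real.sqrt (-m) * r) / Real.sqrt (-m)

/-- The derivative `sin_m'` of the generalized sine function. -/
noncomputable def sinm' (m r : ℝ) : ℝ :=
  if 0 < m then Real.cos (Real.sqrt m * r)
  else if m = 0 then 1
  else Real.cosh (Real.sqrt (-m) * r)

lemma sinm_zero (m : ℝ) : sinm m 0 = 0 := by
  unfold sinm; split_ifs <;> simp

lemma hasDerivAt_sinm (m r : ℝ) : HasDerivAt (sinm m) (sinm' m r) r := by
  unfold sinm sinm'
  split_ifs with h1 h2
  · have hm : Real.sqrt m ≠ 0 := by positivity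
    have h := ((Real.hasDerivAt_sin (Real.sqrt m * r)).comp r
      ((hasDerivAt_id r).const_mul (Real.sqrt m))).div_const (Real.sqrt m)
    simpa [mul_one, mul_div_assoc, mul_div_cancel_left₀ _ hm, mul_comm] using h
  · exact hasDerivAt_id' r
  · have hm : Real.sqrt (-m) ≠ 0 := by
      have : 0 < -m := by linarith [lt_of_le_of_ne (not_lt.1 h1) h2]
      positivity
    have h := ((Real.hasDerivAt_sinh (Real.sqrt (-m) * r)).comp r
      ((hasDerivAt_id r).const_mul (Real.sqrt (-m)))).div_const (Real.sqrt (-m))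
    simpa [mul_one, mul_div_assoc, mul_div_cancel_left₀ _ hm, mul_comm] using h

lemma hasDerivAt_sinm' (m r : ℝ) : HasDerivAt (sinm' m) (-m * sinm m r) r := by
  unfold sinm sinm'
  split_ifs with h1 h2
  · have hm : Real.sqrt m ≠ 0 := by positivity
    have h := (Real.hasDerivAt_cos (Real.sqrt m * r)).comp r
      ((hasDerivAt_id r).const_mul (Real.sqrt m))
    have hds : m / Real.sqrt m = Real.sqrt m := Real.div_sqrt
    have heq : ∀ s : ℝ, -s * (Real.sqrt m * 1) = -m * (s / Real.sqrt m) := by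
      intro s; conv_lhs => rw [← hds]
      ring
    rw [heq _] at h; exact h
  · subst h2; simpa using (hasDerivAt_const r (1:ℝ))
  · have hm0 : 0 < -m := by linarith [lt_of_le_of_ne (not_lt.1 h1) h2]
    have hm : Real.sqrt (-m) ≠ 0 := by positivity
    have h := (Real.hasDerivAt_cosh (Real.sqrt (-m) * r)).comp r
      ((hasDerivAt_id r).const_mul (Real.sqrt (-m)))
    have hds : -m / Real.sqrt (-m) = Real.sqrt (-m) := Real.div_sqrt
    have heq : ∀ s : ℝ, s * (Real.sqrt (-m) * 1) = -m * (s / Real.sqrt (-m)) := by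
      intro s; conv_lhs => rw [← hds]
      ring
    rw [heq _] at h; exact h

lemma sinm_nonneg (m r : ℝ) (hr : 0 ≤ r) (h : 0 < m → Real.sqrt m * r ≤ Real.pi) :
    0 ≤ sinm m r := by
  unfold sinm
  split_ifs with h1 h2
  · exact div_nonneg (Real.sin_nonneg_of_nonneg_of_le_pi (by positivity) (h h1))
      (Real.sqrt_nonneg m)
  · exact hr
  · exact div_nonneg (Real.sinh_nonneg_iff.2 (by positivity)) (Real.sqrt_nonneg _)

/-- For `K ≤ k`, the Wronskian `W(r) = sin_K'(r) sin_k(r) - sin_K(r) sin_k'(r)`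
is nonnegative for all `r ≥ 0` (with `r ≤ π/√k` when `k > 0`). -/
theorem wronskian_nonneg (K k : ℝ) (hKk : K ≤ k) (r : ℝ) (hr : 0 ≤ r)
    (hrk : 0 < k → r ≤ Real.pi / Real.sqrt k) :
    0 ≤ sinm' K r * sinm k r - sinm K r * sinm' k r := by
  set W : ℝ → ℝ := fun x => sinm' K x * sinm k x - sinm K x * sinm' k x with hW
  have hderiv : ∀ x, HasDerivAt W ((k - K) * (sinm K x * sinm k x)) x := by
    intro x
    have h := ((hasDerivAt_sinm' K x).mul (hasDerivAt_sinm k x)).sub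
      ((hasDerivAt_sinm K x).mul (hasDerivAt_sinm' k x))
    rw [show (k - K) * (sinm K x * sinm k x) = -K * sinm K x * sinm k x + sinm' K x * sinm' k x - (sinm' K x * sinm' k x + sinm K x * (-k * sinm k x)) by ring]
    exact h
  -- nonnegativity of sinm on the interval
  have hsk : ∀ x, 0 ≤ x → x ≤ r → 0 ≤ sinm k x := by
    intro x hx hxr
    refine sinm_nonneg k x hx (fun hk => ?_)
    have hsq : 0 < Real.sqrt k := Real.sqrt_pos.2 hk
    have := hrk hk
    calc Real.sqrt k * x ≤ Real.sqrt k * r := by nlinarith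
      _ ≤ Real.sqrt k * (Real.pi / Real.sqrt k) := by nlinarith
      _ = Real.pi := by field_simp
  have hsK : ∀ x, 0 ≤ x → x ≤ r → 0 ≤ sinm K x := by
    intro x hx hxr
    refine sinm_nonneg K x hx (fun hK => ?_)
    have hk : 0 < k := lt_of_lt_of_le hK hKk
    have hsq : 0 < Real.sqrt k := Real.sqrt_pos.2 hk
    have hle : Real.sqrt K ≤ Real.sqrt k := Real.sqrt_le_sqrt hKk
    have := hrk hk
    calc Real.sqrt K * x ≤ Real.sqrt k * x := by nlinarith
      _ ≤ Real.sqrt k * r := by nlinarith [Real.sqrt_nonneg k]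
      _ ≤ Real.sqrt k * (Real.pi / Real.sqrt k) := by nlinarith
      _ = Real.pi := by field_simp
  have hmono : MonotoneOn W (Icc 0 r) := by
    apply monotoneOn_of_deriv_nonneg (convex_Icc 0 r)
    · exact fun x _ => (hderiv x).continuousAt.continuousWithinAt
    · intro x hx
      exact ((hderiv x).differentiableAt).differentiableWithinAt
    · intro x hx
      rw [interior_Icc] at hx
      rw [(hderiv x).deriv]
      exact mul_nonneg (sub_nonneg.2 hKk)
        (mul_nonneg (hsK x hx.1.le hx.2.le) (hsk x hx.1.le hx.2.le))
  have h0 : W 0 = 0 := by simp [hW, sinm_zero]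
  have := hmono (Set.mem_Icc.2 ⟨le_refl 0, hr⟩) (Set.mem_Icc.2 ⟨hr, le_refl r⟩) hr
  rw [h0] at this
  exact this
end

section
/- Let $K \le k$ be real numbers. Then the function $r \mapsto \dfrac{\sin_K(r)}{\sin_k(r)}$ is monotone nondecreasing on the interval $(0, \pi/\sqrt{k})$ if $k > 0$, and on $(0, \infty)$ if $k \le 0$. -/
open Real MeasureTheory Set Filter

lemma neg_pos_of_cases {m : ℝ} (h1 : ¬ 0 < m) (h2 : m ≠ 0) : 0 < -m := by
  rcases lt_trichotomy m 0 with h | h | h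
  · linarith
  · exact absurd h h2
  · exact absurd h h1

lemma sinm_pos_of_pos {m r : ℝ} (hm : 0 < m) (hr : 0 < r) (hr2 : r < Real.pi / Real.sqrt m) :
    0 < sinm m r := by
  have hs : (0:ℝ) < Real.sqrt m := Real.sqrt_pos.2 hm
  have h1 : 0 < Real.sqrt m * r := by positivity
  have h2 : Real.sqrt m * r < Real.pi := by
    have := (lt_div_iff₀ hs).1 hr2
    linarith [this]
  unfold sinm
  rw [if_pos hm]
  exact div_pos (Real.sin_pos_of_pos_of_lt_pi h1 h2) hs

lemma sinm_pos_of_nonpos {m r : ℝ} (hm : m ≤ 0) (hr : 0 < r) : 0 < sinm m r := by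
  unfold sinm
  rcases eq_or_lt_of_le hm with h | h
  · rw [if_neg (by linarith), if_pos h]
    exact hr
  · rw [if_neg (by linarith), if_neg (by linarith)]
    have hs : (0:ℝ) < Real.sqrt (-m) := Real.sqrt_pos.2 (by linarith)
    have : (0:ℝ) < Real.sqrt (-m) * r := by positivity
    exact div_pos (by simpa using Real.sinh_lt_sinh.2 this) hs

lemma aux_mono (K k : ℝ) (hKk : K ≤ k) (S : Set ℝ) (hconv : Convex ℝ S) (hopen : IsOpen S)
    (hpos : ∀ r ∈ S, 0 < r) (hIoo : ∀ r ∈ S, Set.Ioo 0 r ⊆ S)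
    (hK : ∀ r ∈ S, 0 < sinm K r) (hk : ∀ r ∈ S, 0 < sinm k r) :
    MonotoneOn (fun r => sinm K r / sinm k r) S := by
  set W : ℝ → ℝ := fun r => sinm' K r * sinm k r - sinm K r * sinm' k r with hWdef
  have hW : ∀ r, HasDerivAt W ((k - K) * (sinm K r * sinm k r)) r := by
    intro r
    have h := ((hasDerivAt_sinm' K r).mul (hasDerivAt_sinm k r)).sub
      ((hasDerivAt_sinm K r).mul (hasDerivAt_sinm' k r))
    exact h.congr_deriv (by ring)
  have hWc : Continuous W := by
    rw [continuous_iff_continuousAt]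
    exact fun x => (hW x).continuousAt
  have hW0 : W 0 = 0 := by simp [hWdef, sinm_zero]
  have hWnonneg : ∀ r ∈ S, 0 ≤ W r := by
    intro r hr
    have hr0 : 0 < r := hpos r hr
    have hmono : MonotoneOn W (Set.Icc 0 r) := by
      apply monotoneOn_of_deriv_nonneg (convex_Icc 0 r) hWc.continuousOn
      · intro x hx
        exact (hW x).differentiableAt.differentiableWithinAt
      · intro x hx
        rw [interior_Icc] at hx
        rw [(hW x).deriv]
        have hxS : x ∈ S := hIoo r hr hx
        have ha := hK x hxS
        have hb := hk x hxS
        exact mul_nonneg (by linarith) (mul_pos ha hb).le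
    calc (0:ℝ) = W 0 := hW0.symm
    _ ≤ W r := hmono (Set.left_mem_Icc.2 hr0.le) (Set.right_mem_Icc.2 hr0.le) hr0.le
  have hder : ∀ x ∈ S, HasDerivAt (fun r => sinm K r / sinm k r)
      (W x / (sinm k x) ^ 2) x := by
    intro x hx
    have h := (hasDerivAt_sinm K x).div (hasDerivAt_sinm k x) (hk x hx).ne'
    exact h
  apply monotoneOn_of_deriv_nonneg hconv
  · exact fun x hx => ((hder x hx).continuousAt.continuousWithinAt)
  · intro x hx
    rw [hopen.interior_eq] at hx
    exact ((hder x hx).differentiableAt.differentiableWithinAt)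
  · intro x hx
    rw [hopen.interior_eq] at hx
    rw [(hder x hx).deriv]
    exact div_nonneg (hWnonneg x hx) (sq_nonneg _)

/-- For `K ≤ k`, the ratio `sin_K(r)/sin_k(r)` is monotone nondecreasing on
`(0, π/√k)` when `k > 0` and on `(0, ∞)` when `k ≤ 0`. -/
theorem sinm_ratio_monotone (K k : ℝ) (hKk : K ≤ k) :
    MonotoneOn (fun r => sinm K r / sinm k r)
      (if 0 < k then Set.Ioo 0 (Real.pi / Real.sqrt k) else Set.Ioi 0) := by
  by_cases hk : 0 < k
  · rw [if_pos hk]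
    apply aux_mono K k hKk _ (convex_Ioo _ _) isOpen_Ioo
    · exact fun r hr => hr.1
    · intro r hr x hx
      exact ⟨hx.1, hx.2.trans hr.2⟩
    · intro r hr
      by_cases hKpos : 0 < K
      · apply sinm_pos_of_pos hKpos hr.1
        calc r < Real.pi / Real.sqrt k := hr.2
        _ ≤ Real.pi / Real.sqrt K := by
          apply div_le_div_of_nonneg_left Real.pi_pos.le (Real.sqrt_pos.2 hKpos)
            (Real.sqrt_le_sqrt hKk)
      · exact sinm_pos_of_nonpos (not_lt.1 hKpos) hr.1
    · intro r hr
      exact sinm_pos_of_pos hk hr.1 hr.2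
  · rw [if_neg hk]
    apply aux_mono K k hKk _ (convex_Ioi _) isOpen_Ioi
    · exact fun r hr => hr
    · intro r hr x hx
      exact hx.1
    · intro r hr
      exact sinm_pos_of_nonpos (hKk.trans (not_lt.1 hk)) hr
    · intro r hr
      exact sinm_pos_of_nonpos (not_lt.1 hk) hr
end

section
/- Let $K \le k$ be real numbers. Then the function $r \mapsto \dfrac{\sin_k(r)}{\sin_K(r)}$ is monotone nonincreasing on the interval $(0, \pi/\sqrt{k})$ if $k > 0$, and on $(0, \infty)$ if $k \le 0$. -/
open Real MeasureTheory Set Filter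

lemma sinm_pos (m r : ℝ) (hr : 0 < r)
    (hr2 : 0 < m → r < Real.pi / Real.sqrt m) : 0 < sinm m r := by
  unfold sinm
  split_ifs with h1 h2
  · have hs : 0 < Real.sqrt m := Real.sqrt_pos.2 h1
    apply div_pos _ hs
    apply Real.sin_pos_of_pos_of_lt_pi (by positivity)
    have h := hr2 h1
    calc Real.sqrt m * r < Real.sqrt m * (Real.pi / Real.sqrt m) := by
          exact mul_lt_mul_of_pos_left h hs
      _ = Real.pi := by field_simp
  · exact hr
  · have hm0 : 0 < -m := by
      rcases lt_trichotomy m 0 with h | h | h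
      · linarith
      · exact absurd h h2
      · exact absurd h h1
    have hs : 0 < Real.sqrt (-m) := Real.sqrt_pos.2 hm0
    exact div_pos (Real.sinh_pos_iff.2 (by positivity)) hs

lemma wronskian_nonpos (K k : ℝ) (hKk : K ≤ k) (r : ℝ) (hr : 0 < r)
    (hrk : 0 < k → r < Real.pi / Real.sqrt k) :
    sinm' k r * sinm K r - sinm k r * sinm' K r ≤ 0 := by
  set g : ℝ → ℝ := fun x => sinm' k x * sinm K x - sinm k x * sinm' K x with hgdef
  have hg : ∀ x, HasDerivAt g ((K - k) * (sinm k x * sinm K x)) x := by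
    intro x
    have h1 := (hasDerivAt_sinm' k x).mul (hasDerivAt_sinm K x)
    have h2 := (hasDerivAt_sinm k x).mul (hasDerivAt_sinm' K x)
    have := h1.sub h2
    exact this.congr_deriv (by ring)
  have hbound : ∀ x, 0 < x → x < r → 0 < x ∧ (0 < k → x < Real.pi / Real.sqrt k) ∧
      (0 < K → x < Real.pi / Real.sqrt K) := by
    intro x hx hxr
    refine ⟨hx, fun hk => lt_trans hxr (hrk hk), fun hK => ?_⟩
    have hk : 0 < k := lt_of_lt_of_le hK hKk
    have h1 : x < Real.pi / Real.sqrt k := lt_trans hxr (hrk hk)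
    have h2 : Real.pi / Real.sqrt k ≤ Real.pi / Real.sqrt K := by
      apply div_le_div_of_nonneg_left Real.pi_pos.le (Real.sqrt_pos.2 hK)
      exact Real.sqrt_le_sqrt hKk
    linarith
  have key : AntitoneOn g (Set.Icc 0 r) := by
    apply antitoneOn_of_deriv_nonpos (convex_Icc 0 r)
    · exact fun x _ => (hg x).continuousAt.continuousWithinAt
    · intro x _
      exact ((hg x).differentiableAt).differentiableWithinAt
    · intro x hx
      rw [interior_Icc] at hx
      rw [(hg x).deriv]
      obtain ⟨hx0, hxk, hxK⟩ := hbound x hx.1 hx.2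
      have h1 : 0 < sinm k x := sinm_pos k x hx0 hxk
      have h2 : 0 < sinm K x := sinm_pos K x hx0 hxK
      have : 0 < sinm k x * sinm K x := mul_pos h1 h2
      nlinarith
  have h0 : g 0 = 0 := by simp [hgdef, sinm_zero]
  have := key (Set.left_mem_Icc.2 hr.le) ⟨hr.le, le_refl r⟩ hr.le
  rw [h0] at this
  exact this

/-- For `K ≤ k`, the ratio `sin_k(r)/sin_K(r)` is monotone nonincreasing on
`(0, π/√k)` when `k > 0` and on `(0, ∞)` when `k ≤ 0`. -/
theorem sinm_ratio_antitone (K k : ℝ) (hKk : K ≤ k) :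
    AntitoneOn (fun r => sinm k r / sinm K r)
      (if 0 < k then Set.Ioo 0 (Real.pi / Real.sqrt k) else Set.Ioi 0) := by
  set s := if 0 < k then Set.Ioo 0 (Real.pi / Real.sqrt k) else Set.Ioi 0 with hs
  have hmem : ∀ x ∈ s, 0 < x ∧ (0 < k → x < Real.pi / Real.sqrt k) := by
    intro x hx
    by_cases hk : 0 < k
    · rw [hs, if_pos hk] at hx
      exact ⟨hx.1, fun _ => hx.2⟩
    · rw [hs, if_neg hk] at hx
      exact ⟨hx, fun h => absurd h hk⟩
  have hKmem : ∀ x ∈ s, 0 < x ∧ (0 < K → x < Real.pi / Real.sqrt K) := by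
    intro x hx
    obtain ⟨hx0, hxk⟩ := hmem x hx
    refine ⟨hx0, fun hK => ?_⟩
    have hk : 0 < k := lt_of_lt_of_le hK hKk
    have h1 : x < Real.pi / Real.sqrt k := hxk hk
    have h2 : Real.pi / Real.sqrt k ≤ Real.pi / Real.sqrt K := by
      apply div_le_div_of_nonneg_left Real.pi_pos.le (Real.sqrt_pos.2 hK)
      exact Real.sqrt_le_sqrt hKk
    linarith
  have hKpos : ∀ x ∈ s, 0 < sinm K x := fun x hx =>
    sinm_pos K x (hKmem x hx).1 (hKmem x hx).2
  have hderiv : ∀ x ∈ s, HasDerivAt (fun r => sinm k r / sinm K r)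
      ((sinm' k x * sinm K x - sinm k x * sinm' K x) / (sinm K x)^2) x := by
    intro x hx
    exact (hasDerivAt_sinm k x).div (hasDerivAt_sinm K x) (ne_of_gt (hKpos x hx))
  have hconv : Convex ℝ s := by
    rw [hs]; split_ifs
    · exact convex_Ioo _ _
    · exact convex_Ioi _
  have hopen : IsOpen s := by
    rw [hs]; split_ifs
    · exact isOpen_Ioo
    · exact isOpen_Ioi
  have hint : interior s = s := hopen.interior_eq
  apply antitoneOn_of_deriv_nonpos hconv
  · exact fun x hx => (hderiv x hx).continuousAt.continuousWithinAt
  · rw [hint]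
    exact fun x hx => ((hderiv x hx).differentiableAt).differentiableWithinAt
  · rw [hint]
    intro x hx
    rw [(hderiv x hx).deriv]
    apply div_nonpos_of_nonpos_of_nonneg
    · obtain ⟨hx0, hxk⟩ := hmem x hx
      exact wronskian_nonpos K k hKk x hx0 hxk
    · positivity
end

section
/- Let $a, b > 0$ be real numbers. Then the function $r \mapsto \dfrac{\sinh(a r)}{\sin(b r)}$ is strictly monotone increasing on the interval $(0, \pi/b)$. -/
open Real Set

/-- For `a, b > 0`, the function `r ↦ sinh(a r)/sin(b r)` is strictly
monotone increasing on `(0, π/b)`. -/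
theorem sinh_div_sin_strictMono (a b : ℝ) (ha : 0 < a) (hb : 0 < b) :
    StrictMonoOn (fun r => Real.sinh (a * r) / Real.sin (b * r))
      (Set.Ioo 0 (Real.pi / b)) := by
  have hπ : 0 < Real.pi / b := div_pos Real.pi_pos hb
  set g : ℝ → ℝ := fun r =>
    a * Real.cosh (a*r) * Real.sin (b*r) - b * Real.sinh (a*r) * Real.cos (b*r) with hgdef
  have h1 : ∀ r : ℝ, HasDerivAt (fun r : ℝ => a*r) a r := fun r => by
    simpa using (hasDerivAt_id r).const_mul a
  have h2 : ∀ r : ℝ, HasDerivAt (fun r : ℝ => b*r) b r := fun r => by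
    simpa using (hasDerivAt_id r).const_mul b
  have hgd : ∀ r : ℝ,
      HasDerivAt g ((a^2 + b^2) * (Real.sinh (a*r) * Real.sin (b*r))) r := by
    intro r
    have hc : HasDerivAt (fun r => Real.cosh (a*r)) (Real.sinh (a*r) * a) r := (h1 r).cosh
    have hs : HasDerivAt (fun r => Real.sin (b*r)) (Real.cos (b*r) * b) r := (h2 r).sin
    have hsh : HasDerivAt (fun r => Real.sinh (a*r)) (Real.cosh (a*r) * a) r := (h1 r).sinh
    have hcs : HasDerivAt (fun r => Real.cos (b*r)) (-Real.sin (b*r) * b) r := (h2 r).cos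
    have : HasDerivAt (fun r => a * Real.cosh (a*r) * Real.sin (b*r) - b * Real.sinh (a*r) * Real.cos (b*r)) _ r :=
      ((hc.const_mul a).mul hs).sub ((hsh.const_mul b).mul hcs)
    convert this using 1
    ring
  have hsin : ∀ r ∈ Ioo (0:ℝ) (Real.pi / b), 0 < Real.sin (b*r) := by
    intro r hr
    refine Real.sin_pos_of_pos_of_lt_pi (mul_pos hb hr.1) ?_
    have := (lt_div_iff₀ hb).1 hr.2
    linarith [this]
  have hgmono : StrictMonoOn g (Icc 0 (Real.pi / b)) := by
    apply strictMonoOn_of_deriv_pos (convex_Icc _ _)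
    · refine Continuous.continuousOn ?_
      rw [hgdef]
      fun_prop
    · intro r hr
      rw [interior_Icc] at hr
      rw [(hgd r).deriv]
      have hs := hsin r hr
      have hsh : 0 < Real.sinh (a*r) := Real.sinh_pos_iff.2 (mul_pos ha hr.1)
      positivity
  have hgpos : ∀ r ∈ Ioo (0:ℝ) (Real.pi / b), 0 < g r := by
    intro r hr
    have h0 : g 0 = 0 := by simp [hgdef]
    have := hgmono (left_mem_Icc.2 hπ.le) ⟨hr.1.le, hr.2.le⟩ hr.1
    rwa [h0] at this
  apply strictMonoOn_of_deriv_pos (convex_Ioo _ _)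
  · apply ContinuousOn.div
    · exact Continuous.continuousOn (by fun_prop)
    · exact Continuous.continuousOn (by fun_prop)
    · exact fun r hr => (hsin r hr).ne'
  · intro r hr
    rw [interior_Ioo] at hr
    have hs := hsin r hr
    have hd : HasDerivAt (fun r => Real.sinh (a * r) / Real.sin (b * r))
        ((Real.cosh (a*r) * a * Real.sin (b*r) - Real.sinh (a*r) * (Real.cos (b*r) * b))
          / (Real.sin (b*r))^2) r := ((h1 r).sinh.div (h2 r).sin hs.ne')
    rw [hd.deriv]
    have hg := hgpos r hr
    have : Real.cosh (a*r) * a * Real.sin (b*r) - Real.sinh (a*r) * (Real.cos (b*r) * b)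
        = g r := by rw [hgdef]; ring
    rw [this]
    positivity
end

section
/- Let $0 < a \le b$ be real numbers. Then the function $r \mapsto \dfrac{\sin(a r)}{\sin(b r)}$ is monotone nondecreasing on the interval $(0, \pi/b)$. -/
open Real Set

private lemma cot_aux : AntitoneOn (fun t : ℝ => t * Real.cos t / Real.sin t)
    (Set.Ioo 0 Real.pi) := by
  have hderiv : ∀ t ∈ Set.Ioo (0:ℝ) Real.pi,
      HasDerivAt (fun t : ℝ => t * Real.cos t / Real.sin t)
        (((Real.cos t - t * Real.sin t) * Real.sin t - t * Real.cos t * Real.cos t)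
          / Real.sin t ^ 2) t := by
    intro t ht
    have hs : Real.sin t ≠ 0 := (Real.sin_pos_of_pos_of_lt_pi ht.1 ht.2).ne'
    have h1 : HasDerivAt (fun t : ℝ => t * Real.cos t)
        (1 * Real.cos t + t * (-Real.sin t)) t :=
      (hasDerivAt_id t).mul (Real.hasDerivAt_cos t)
    have := (h1.div (Real.hasDerivAt_sin t) hs :
      HasDerivAt (fun t : ℝ => t * Real.cos t / Real.sin t) _ t)
    refine this.congr_deriv ?_
    ring
  apply antitoneOn_of_deriv_nonpos (convex_Ioo _ _)
  · apply ContinuousOn.div (by fun_prop) (by fun_prop)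
    intro t ht
    exact (Real.sin_pos_of_pos_of_lt_pi ht.1 ht.2).ne'
  · rw [interior_Ioo]
    exact fun t ht => (hderiv t ht).differentiableAt.differentiableWithinAt
  · rw [interior_Ioo]
    intro t ht
    rw [(hderiv t ht).deriv]
    have hsp : 0 < Real.sin t := Real.sin_pos_of_pos_of_lt_pi ht.1 ht.2
    apply div_nonpos_of_nonpos_of_nonneg _ (sq_nonneg _)
    have h2 : Real.sin t ^ 2 + Real.cos t ^ 2 = 1 := Real.sin_sq_add_cos_sq t
    have h3 : Real.cos t * Real.sin t ≤ Real.sin t := by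
      nlinarith [Real.cos_le_one t]
    have h4 : Real.sin t < t := Real.sin_lt ht.1
    nlinarith

/-- For `0 < a ≤ b`, the function `r ↦ sin(a r)/sin(b r)` is monotone
nondecreasing on `(0, π/b)`. -/
theorem sin_div_sin_monotone (a b : ℝ) (ha : 0 < a) (hab : a ≤ b) :
    MonotoneOn (fun r => Real.sin (a * r) / Real.sin (b * r))
      (Set.Ioo 0 (Real.pi / b)) := by
  have hb : 0 < b := lt_of_lt_of_le ha hab
  have hbr : ∀ r ∈ Set.Ioo (0:ℝ) (Real.pi / b), 0 < b * r ∧ b * r < Real.pi := by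
    intro r hr
    constructor
    · exact mul_pos hb hr.1
    · rw [mul_comm]
      exact (lt_div_iff₀ hb).mp hr.2
  have hsbr : ∀ r ∈ Set.Ioo (0:ℝ) (Real.pi / b), 0 < Real.sin (b * r) := by
    intro r hr
    exact Real.sin_pos_of_pos_of_lt_pi (hbr r hr).1 (hbr r hr).2
  have hderiv : ∀ r ∈ Set.Ioo (0:ℝ) (Real.pi / b),
      HasDerivAt (fun r => Real.sin (a * r) / Real.sin (b * r))
        ((Real.cos (a * r) * a * Real.sin (b * r)
          - Real.sin (a * r) * (Real.cos (b * r) * b)) / Real.sin (b * r) ^ 2) r := by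
    intro r hr
    have h1 : HasDerivAt (fun r : ℝ => Real.sin (a * r)) (Real.cos (a * r) * a) r := by
      simpa [Function.comp_def] using (Real.hasDerivAt_sin (a * r)).comp r ((hasDerivAt_id r).const_mul a)
    have h2 : HasDerivAt (fun r : ℝ => Real.sin (b * r)) (Real.cos (b * r) * b) r := by
      simpa [Function.comp_def] using (Real.hasDerivAt_sin (b * r)).comp r ((hasDerivAt_id r).const_mul b)
    exact h1.div h2 (hsbr r hr).ne'
  apply monotoneOn_of_deriv_nonneg (convex_Ioo _ _)
  · apply ContinuousOn.div (by fun_prop) (by fun_prop)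
    intro r hr
    exact (hsbr r hr).ne'
  · rw [interior_Ioo]
    exact fun r hr => (hderiv r hr).differentiableAt.differentiableWithinAt
  · rw [interior_Ioo]
    intro r hr
    rw [(hderiv r hr).deriv]
    apply div_nonneg _ (sq_nonneg _)
    -- key: apply cot_aux at x = a*r, y = b*r
    have hx : a * r ∈ Set.Ioo (0:ℝ) Real.pi := by
      constructor
      · exact mul_pos ha hr.1
      · calc a * r ≤ b * r := by nlinarith [hr.1]
          _ < Real.pi := (hbr r hr).2
    have hy : b * r ∈ Set.Ioo (0:ℝ) Real.pi := ⟨(hbr r hr).1, (hbr r hr).2⟩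
    have hle : a * r ≤ b * r := by nlinarith [hr.1]
    have key := cot_aux hx hy hle
    simp only at key
    have hsx : 0 < Real.sin (a * r) := Real.sin_pos_of_pos_of_lt_pi hx.1 hx.2
    have hsy : 0 < Real.sin (b * r) := hsbr r hr
    rw [div_le_div_iff₀ hsy hsx] at key
    nlinarith [hr.1]
end

section
/- Let $a \ge b > 0$ be real numbers. Then the function $r \mapsto \dfrac{\sinh(a r)}{\sinh(b r)}$ is monotone nondecreasing on $(0, \infty)$. -/
open Real Set

private lemma sinh_aux_hasDerivAt (c x : ℝ) :
    HasDerivAt (fun y : ℝ => Real.sinh (c * y)) (Real.cosh (c * x) * c) x := by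
  have h1 : HasDerivAt (fun y : ℝ => c * y) c x := by
    simpa using (hasDerivAt_id x).const_mul c
  exact (Real.hasDerivAt_sinh (c * x)).comp x h1

private lemma sinh_key (c d : ℝ) (hd : 0 ≤ d) (hdc : d ≤ c) {t : ℝ} (ht : 0 ≤ t) :
    c * Real.sinh (d * t) ≤ d * Real.sinh (c * t) := by
  have hc : 0 ≤ c := hd.trans hdc
  have hmono : MonotoneOn (fun x => d * Real.sinh (c * x) - c * Real.sinh (d * x))
      (Set.Ici (0 : ℝ)) := by
    apply monotoneOn_of_deriv_nonneg (convex_Ici 0)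
    · fun_prop
    · intro x _
      exact (((sinh_aux_hasDerivAt c x).const_mul d).sub
        ((sinh_aux_hasDerivAt d x).const_mul c)).differentiableAt.differentiableWithinAt
    · intro x hx
      rw [interior_Ici] at hx
      have hderiv : deriv (fun x => d * Real.sinh (c * x) - c * Real.sinh (d * x)) x
          = d * (Real.cosh (c * x) * c) - c * (Real.cosh (d * x) * d) :=
        (((sinh_aux_hasDerivAt c x).const_mul d).sub
          ((sinh_aux_hasDerivAt d x).const_mul c)).deriv
      rw [hderiv]
      have hcosh : Real.cosh (d * x) ≤ Real.cosh (c * x) := by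
        rw [Real.cosh_le_cosh]
        have hx' : 0 ≤ x := le_of_lt hx
        rw [abs_of_nonneg (mul_nonneg hd hx'), abs_of_nonneg (mul_nonneg hc hx')]
        exact mul_le_mul_of_nonneg_right hdc hx'
      nlinarith [mul_nonneg hc hd]
  have h0 : (fun x => d * Real.sinh (c * x) - c * Real.sinh (d * x)) 0 = 0 := by simp
  have := hmono (Set.self_mem_Ici) (Set.mem_Ici.mpr ht) ht
  rw [h0] at this
  simp only at this
  linarith

/-- For `a ≥ b > 0`, the function `r ↦ sinh(a r)/sinh(b r)` is monotone
nondecreasing on `(0, ∞)`. -/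
theorem sinh_div_sinh_monotone (a b : ℝ) (hb : 0 < b) (hab : b ≤ a) :
    MonotoneOn (fun r => Real.sinh (a * r) / Real.sinh (b * r)) (Set.Ioi 0) := by
  have ha : 0 < a := hb.trans_le hab
  have hne : ∀ r : ℝ, r ∈ Set.Ioi (0 : ℝ) → Real.sinh (b * r) ≠ 0 := fun r hr =>
    ne_of_gt (Real.sinh_pos_iff.mpr (mul_pos hb hr))
  apply monotoneOn_of_deriv_nonneg (convex_Ioi 0)
  · exact ContinuousOn.div (by fun_prop) (by fun_prop) hne
  · intro r hr
    rw [interior_Ioi] at hr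
    exact (((sinh_aux_hasDerivAt a r).div (sinh_aux_hasDerivAt b r)
      (hne r hr)).differentiableAt).differentiableWithinAt
  · intro r hr
    rw [interior_Ioi] at hr
    have hrpos : (0 : ℝ) < r := hr
    have hderiv : deriv (fun r => Real.sinh (a * r) / Real.sinh (b * r)) r
        = (Real.cosh (a * r) * a * Real.sinh (b * r)
            - Real.sinh (a * r) * (Real.cosh (b * r) * b)) / (Real.sinh (b * r)) ^ 2 :=
      ((sinh_aux_hasDerivAt a r).div (sinh_aux_hasDerivAt b r) (hne r hr)).deriv
    rw [hderiv]
    apply div_nonneg _ (sq_nonneg _)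
    have hkey := sinh_key (a + b) (a - b) (by linarith) (by linarith) hrpos.le
    rw [show (a - b) * r = a * r - b * r from by ring,
      show (a + b) * r = a * r + b * r from by ring,
      Real.sinh_sub, Real.sinh_add] at hkey
    nlinarith [hkey]
end
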